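/- Let (f_X, f_Y) and (f_{X'}, f_{Y'}) be two pairs of densities each satisfying the privacy loss distribution assumptions, with privacy loss functions L_{X/Y}, L_{X'/Y'} and PLD densities ω_{X/Y}, ω_{X'/Y'}. Then for every measurable set S ⊆ ℝ, ∬_{{(t₁,t₂) ∈ ℝ² : L_{X/Y}(t₁) + L_{X'/Y'}(t₂) ∈ S}} f_X(t₁) f_{X'}(t₂) dt₁ dt₂ = ∫_S (ω_{X/Y} * ω_{X'/Y'})(t) dt, where (ω_{X/Y} * ω_{X'/Y'})(t) = ∫_ℝ ω_{X/Y}(u) ω_{X'/Y'}(t − u) du. That is, the privacy loss distribution of the composition of the two mechanisms is the convolution of their individual privacy loss distributions. -/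
import Mathlib


open MeasureTheory Real Set

/-- Convolution of two real functions. -/
noncomputable def conv (h₁ h₂ : ℝ → ℝ) : ℝ → ℝ := fun x => ∫ t, h₁ t * h₂ (x - t)

section Aux
open Filter Topology
variable {L Linv Linv' : ℝ → ℝ} {D : Set ℝ}

lemma aux_LD (hrange : Set.range L = D) (hLinv : ∀ t, Linv (L t) = t) :
    ∀ s ∈ D, L (Linv s) = s := by
  intro s hs
  rw [← hrange] at hs
  obtain ⟨t, rfl⟩ := hs
  rw [hLinv]

lemma aux_img (hrange : Set.range L = D) (hLinv : ∀ t, Linv (L t) = t) :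
    Linv '' D = Set.univ := by
  apply Set.eq_univ_of_forall
  intro t
  exact ⟨L t, by rw [← hrange]; exact ⟨t, rfl⟩, hLinv t⟩

lemma aux_inj (hrange : Set.range L = D) (hLinv : ∀ t, Linv (L t) = t) :
    Set.InjOn Linv D := by
  intro a ha b hb h
  rw [← aux_LD hrange hLinv a ha, ← aux_LD hrange hLinv b hb, h]

lemma aux_mono (hrange : Set.range L = D) (hmono : StrictMono L)
    (hLinv : ∀ t, Linv (L t) = t) :
    ∀ a ∈ D, ∀ b ∈ D, a < b → Linv a < Linv b := by
  intro a ha b hb hab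
  rw [← hrange] at ha hb
  obtain ⟨x, rfl⟩ := ha
  obtain ⟨y, rfl⟩ := hb
  rw [hLinv, hLinv]
  exact hmono.lt_iff_lt.mp hab

lemma aux_nonneg (hD : IsOpen D) (hrange : Set.range L = D) (hmono : StrictMono L)
    (hLinv : ∀ t, Linv (L t) = t) (hLinvD : ∀ s ∈ D, HasDerivAt Linv (Linv' s) s) :
    ∀ s ∈ D, 0 ≤ Linv' s := by
  intro s hs
  have h := hasDerivAt_iff_tendsto_slope.1 (hLinvD s hs)
  refine ge_of_tendsto h ?_
  filter_upwards [self_mem_nhdsWithin, mem_nhdsWithin_of_mem_nhds (hD.mem_nhds hs)]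
    with y hy hyD
  have hy' : y ≠ s := hy
  rcases lt_or_gt_of_ne hy' with hlt | hgt
  · have h1 : Linv y < Linv s := aux_mono hrange hmono hLinv y hyD s hs hlt
    rw [slope_def_field]
    exact div_nonneg_of_nonpos (by linarith) (by linarith)
  · have h1 : Linv s < Linv y := aux_mono hrange hmono hLinv s hs y hyD hgt
    rw [slope_def_field]
    exact div_nonneg (by linarith) (by linarith)

lemma aux_cov (hD : IsOpen D) (hrange : Set.range L = D) (hmono : StrictMono L)
    (hLinv : ∀ t, Linv (L t) = t) (hLinvD : ∀ s ∈ D, HasDerivAt Linv (Linv' s) s)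
    (f g : ℝ → ℝ) :
    ∫ x, f x * g (L x) = ∫ s, D.indicator (fun u => f (Linv u) * Linv' u) s * g s := by
  have h1 : ∫ x, f x * g (L x) = ∫ x in Linv '' D, f x * g (L x) := by
    rw [aux_img hrange hLinv, setIntegral_univ]
  rw [h1, integral_image_eq_integral_abs_deriv_smul hD.measurableSet
      (fun s hs => (hLinvD s hs).hasDerivWithinAt) (aux_inj hrange hLinv)]
  have h2 : ∫ s in D, |Linv' s| • (f (Linv s) * g (L (Linv s)))
      = ∫ s in D, (f (Linv s) * Linv' s) * g s := by
    refine setIntegral_congr_fun hD.measurableSet (fun s hs => ?_)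
    rw [abs_of_nonneg (aux_nonneg hD hrange hmono hLinv hLinvD s hs),
      aux_LD hrange hLinv s hs, smul_eq_mul]
    ring
  rw [h2, ← integral_indicator hD.measurableSet]
  refine integral_congr_ae (Filter.EventuallyEq.of_eq (funext fun s => ?_))
  by_cases hs : s ∈ D
  · simp [Set.indicator_of_mem hs]
  · simp [Set.indicator_of_notMem hs]

lemma aux_int (hD : IsOpen D) (hrange : Set.range L = D) (hmono : StrictMono L)
    (hLinv : ∀ t, Linv (L t) = t) (hLinvD : ∀ s ∈ D, HasDerivAt Linv (Linv' s) s)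
    {f : ℝ → ℝ} (hf : Integrable f) :
    Integrable (D.indicator fun u => f (Linv u) * Linv' u) := by
  have h0 : IntegrableOn f (Linv '' D) := by
    rw [aux_img hrange hLinv]; exact hf.integrableOn
  rw [integrableOn_image_iff_integrableOn_abs_deriv_smul hD.measurableSet
      (fun s hs => (hLinvD s hs).hasDerivWithinAt) (aux_inj hrange hLinv)] at h0
  refine (h0.integrable_indicator hD.measurableSet).congr
    (Filter.EventuallyEq.of_eq (funext fun s => ?_))
  by_cases hs : s ∈ D
  · simp only [Set.indicator_of_mem hs, smul_eq_mul,
      abs_of_nonneg (aux_nonneg hD hrange hmono hLinv hLinvD s hs)]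
    ring
  · simp [Set.indicator_of_notMem hs]

lemma aux_nn (hD : IsOpen D) (hrange : Set.range L = D) (hmono : StrictMono L)
    (hLinv : ∀ t, Linv (L t) = t) (hLinvD : ∀ s ∈ D, HasDerivAt Linv (Linv' s) s)
    {f : ℝ → ℝ} (hf : ∀ t, 0 < f t) :
    ∀ s, 0 ≤ D.indicator (fun u => f (Linv u) * Linv' u) s :=
  fun s => Set.indicator_apply_nonneg
    (fun hu => mul_nonneg (hf _).le (aux_nonneg hD hrange hmono hLinv hLinvD s hu))

end Aux

lemma aux_main {L₁ L₂ Linv Linv' L2inv L2inv' f₁ f₂ : ℝ → ℝ} {D D2 : Set ℝ}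
    (hD : IsOpen D) (hrange : Set.range L₁ = D) (hmono : StrictMono L₁)
    (hcont : Continuous L₁)
    (hLinv : ∀ t, Linv (L₁ t) = t) (hLinvD : ∀ s ∈ D, HasDerivAt Linv (Linv' s) s)
    (hD2 : IsOpen D2) (hrange2 : Set.range L₂ = D2) (hmono2 : StrictMono L₂)
    (hcont2 : Continuous L₂)
    (hL2inv : ∀ t, L2inv (L₂ t) = t) (hL2invD : ∀ s ∈ D2, HasDerivAt L2inv (L2inv' s) s)
    (hf₁m : Measurable f₁) (hf₂m : Measurable f₂)
    (hf₁pos : ∀ t, 0 < f₁ t) (hf₂pos : ∀ t, 0 < f₂ t)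
    (hf₁i : Integrable f₁) (hf₂i : Integrable f₂)
    (S : Set ℝ) (hS : MeasurableSet S) :
    (∫ p : ℝ × ℝ in {p : ℝ × ℝ | L₁ p.1 + L₂ p.2 ∈ S}, f₁ p.1 * f₂ p.2)
      = ∫ t in S, conv (D.indicator (fun u => f₁ (Linv u) * Linv' u))
          (D2.indicator (fun u => f₂ (L2inv u) * L2inv' u)) t := by
  set ω₁ := D.indicator (fun u => f₁ (Linv u) * Linv' u) with hω₁
  set ω₂ := D2.indicator (fun u => f₂ (L2inv u) * L2inv' u) with hω₂
  set χ := S.indicator (fun _ : ℝ => (1 : ℝ)) with hχ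
  have hχm : Measurable χ := measurable_const.indicator hS
  have hχ0 : ∀ t, 0 ≤ χ t := fun t => Set.indicator_apply_nonneg (fun _ => zero_le_one)
  have hχ1 : ∀ t, χ t ≤ 1 := by
    intro t
    by_cases h : t ∈ S <;> simp [hχ, Set.indicator_of_mem, Set.indicator_of_notMem, h]
  have hω₁i : Integrable ω₁ := aux_int hD hrange hmono hLinv hLinvD hf₁i
  have hω₂i : Integrable ω₂ := aux_int hD2 hrange2 hmono2 hL2inv hL2invD hf₂i
  have hω₁nn : ∀ s, 0 ≤ ω₁ s := aux_nn hD hrange hmono hLinv hLinvD hf₁pos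
  have hω₂nn : ∀ s, 0 ≤ ω₂ s := aux_nn hD2 hrange2 hmono2 hL2inv hL2invD hf₂pos
  have hTm : MeasurableSet {p : ℝ × ℝ | L₁ p.1 + L₂ p.2 ∈ S} :=
    ((hcont.comp continuous_fst).add (hcont2.comp continuous_snd)).measurable hS
  -- Step 1: rewrite as a full-space integral against χ
  have step1 : (∫ p : ℝ × ℝ in {p : ℝ × ℝ | L₁ p.1 + L₂ p.2 ∈ S}, f₁ p.1 * f₂ p.2)
      = ∫ p : ℝ × ℝ, f₁ p.1 * f₂ p.2 * χ (L₁ p.1 + L₂ p.2) := by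
    rw [← integral_indicator hTm]
    refine integral_congr_ae (.of_eq (funext fun p => ?_))
    by_cases hp : L₁ p.1 + L₂ p.2 ∈ S
    · simp [Set.indicator_of_mem, hp, hχ, Set.mem_setOf_eq]
    · simp [Set.indicator_of_notMem, hp, hχ, Set.mem_setOf_eq]
  -- Integrability of the integrand
  have hΦm : Measurable (fun p : ℝ × ℝ => f₁ p.1 * f₂ p.2 * χ (L₁ p.1 + L₂ p.2)) :=
    ((hf₁m.comp measurable_fst).mul (hf₂m.comp measurable_snd)).mul
      (hχm.comp ((hcont.comp continuous_fst).add (hcont2.comp continuous_snd)).measurable)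
  have hΦi : Integrable (fun p : ℝ × ℝ => f₁ p.1 * f₂ p.2 * χ (L₁ p.1 + L₂ p.2))
      ((volume : Measure ℝ).prod volume) := by
    refine Integrable.mono' (hf₁i.mul_prod hf₂i) hΦm.aestronglyMeasurable
      (ae_of_all _ fun p => ?_)
    rw [Real.norm_eq_abs,
      abs_of_nonneg (mul_nonneg (mul_nonneg (hf₁pos _).le (hf₂pos _).le) (hχ0 _))]
    exact mul_le_of_le_one_right (mul_nonneg (hf₁pos _).le (hf₂pos _).le) (hχ1 _)
  -- inner change of variables
  have inner : ∀ u, (∫ t₂, f₂ t₂ * χ (u + L₂ t₂)) = ∫ v, ω₂ v * χ (u + v) := by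
    intro u
    have h := aux_cov hD2 hrange2 hmono2 hL2inv hL2invD f₂ (fun v => χ (u + v))
    simpa [← hω₂] using h
  -- outer change of variables
  have outer : (∫ t₁, f₁ t₁ * (∫ v, ω₂ v * χ (L₁ t₁ + v)))
      = ∫ u, ω₁ u * (∫ v, ω₂ v * χ (u + v)) := by
    have h := aux_cov hD hrange hmono hLinv hLinvD f₁ (fun w => ∫ v, ω₂ v * χ (w + v))
    simpa [← hω₁] using h
  have step2 : (∫ p : ℝ × ℝ, f₁ p.1 * f₂ p.2 * χ (L₁ p.1 + L₂ p.2))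
      = ∫ u, ω₁ u * (∫ v, ω₂ v * χ (u + v)) := by
    rw [MeasureTheory.Measure.volume_eq_prod, integral_prod _ hΦi]
    rw [← outer]
    refine integral_congr_ae (.of_eq (funext fun t₁ => ?_))
    simp only [mul_assoc]
    rw [integral_const_mul, inner (L₁ t₁)]
  -- product-space version with ω's
  have hF₁i : Integrable (fun p : ℝ × ℝ => ω₁ p.1 * ω₂ p.2 * χ (p.1 + p.2))
      ((volume : Measure ℝ).prod volume) := by
    refine Integrable.mono' (hω₁i.mul_prod hω₂i)
      ((hω₁i.mul_prod hω₂i).aestronglyMeasurable.mul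
        ((hχm.comp (measurable_fst.add measurable_snd)).aestronglyMeasurable))
      (ae_of_all _ fun p => ?_)
    rw [Real.norm_eq_abs,
      abs_of_nonneg (mul_nonneg (mul_nonneg (hω₁nn _) (hω₂nn _)) (hχ0 _))]
    exact mul_le_of_le_one_right (mul_nonneg (hω₁nn _) (hω₂nn _)) (hχ1 _)
  have hemb : MeasurableEmbedding (fun z : ℝ × ℝ => (z.1, z.2 - z.1)) :=
    (MeasurableEquiv.shearSubRight ℝ).measurableEmbedding
  have hmp : MeasurePreserving (fun z : ℝ × ℝ => (z.1, z.2 - z.1))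
      ((volume : Measure ℝ).prod volume) ((volume : Measure ℝ).prod volume) :=
    measurePreserving_prod_sub volume volume
  have keyswap : (∫ p : ℝ × ℝ, ω₁ p.1 * ω₂ p.2 * χ (p.1 + p.2)
        ∂((volume : Measure ℝ).prod volume))
      = ∫ p : ℝ × ℝ, ω₁ p.1 * ω₂ (p.2 - p.1) * χ p.2
        ∂((volume : Measure ℝ).prod volume) := by
    rw [← hmp.integral_comp hemb (fun p : ℝ × ℝ => ω₁ p.1 * ω₂ p.2 * χ (p.1 + p.2))]
    refine integral_congr_ae (.of_eq (funext fun p => ?_))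
    simp
  have hF₂i : Integrable (fun p : ℝ × ℝ => ω₁ p.1 * ω₂ (p.2 - p.1) * χ p.2)
      ((volume : Measure ℝ).prod volume) := by
    have h := (hmp.integrable_comp_emb hemb).2 hF₁i
    refine h.congr (ae_of_all _ fun p => ?_)
    simp [Function.comp]
  have step3 : (∫ u, ω₁ u * (∫ v, ω₂ v * χ (u + v)))
      = ∫ t, conv ω₁ ω₂ t * χ t := by
    have h1 : (∫ u, ω₁ u * (∫ v, ω₂ v * χ (u + v)))
        = ∫ p : ℝ × ℝ, ω₁ p.1 * ω₂ p.2 * χ (p.1 + p.2)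
          ∂((volume : Measure ℝ).prod volume) := by
      rw [integral_prod _ hF₁i]
      refine integral_congr_ae (.of_eq (funext fun u => ?_))
      rw [← integral_const_mul]
      simp only [mul_assoc]
    rw [h1, keyswap, integral_prod_symm _ hF₂i]
    refine integral_congr_ae (.of_eq (funext fun t => ?_))
    rw [conv, ← integral_mul_const]
  have final : (∫ t, conv ω₁ ω₂ t * χ t) = ∫ t in S, conv ω₁ ω₂ t := by
    rw [← integral_indicator hS]
    refine integral_congr_ae (.of_eq (funext fun t => ?_))
    by_cases ht : t ∈ S
    · simp [Set.indicator_of_mem, ht, hχ]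
    · simp [Set.indicator_of_notMem, ht, hχ]
  rw [step1, step2, step3, final]

/-- The privacy loss distribution of the composition of two mechanisms is the
convolution of their individual privacy loss distributions: for every measurable `S`,
the mass that the pair of privacy loss functions assigns to `S` equals `∫_S ω₁ * ω₂`. -/
theorem pld_composition_convolution
    (fX fY fX2 fY2 : ℝ → ℝ) (D D2 : Set ℝ) (Linv Linv' L2inv L2inv' : ℝ → ℝ)
    (hfXm : Measurable fX) (hfYm : Measurable fY)
    (hfX2m : Measurable fX2) (hfY2m : Measurable fY2)
    (hfXpos : ∀ t, 0 < fX t) (hfYpos : ∀ t, 0 < fY t)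
    (hfX2pos : ∀ t, 0 < fX2 t) (hfY2pos : ∀ t, 0 < fY2 t)
    (hfXi : Integrable fX) (hfYi : Integrable fY)
    (hfX2i : Integrable fX2) (hfY2i : Integrable fY2)
    (hfX1 : (∫ t, fX t) = 1) (hfY1 : (∫ t, fY t) = 1)
    (hfX21 : (∫ t, fX2 t) = 1) (hfY21 : (∫ t, fY2 t) = 1)
    -- pair 1: `L_{X/Y}` is a strictly increasing C¹ bijection onto the open interval `D`
    (hD : IsOpen D) (hDconn : D.OrdConnected)
    (hrange : Set.range (fun t => Real.log (fX t / fY t)) = D)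
    (hmono : StrictMono (fun t => Real.log (fX t / fY t)))
    (hsmooth : ContDiff ℝ 1 (fun t => Real.log (fX t / fY t)))
    (hLinv : ∀ t, Linv (Real.log (fX t / fY t)) = t)
    (hLinvD : ∀ s ∈ D, HasDerivAt Linv (Linv' s) s)
    -- pair 2: `L_{X'/Y'}` is a strictly increasing C¹ bijection onto the open interval `D2`
    (hD2 : IsOpen D2) (hD2conn : D2.OrdConnected)
    (hrange2 : Set.range (fun t => Real.log (fX2 t / fY2 t)) = D2)
    (hmono2 : StrictMono (fun t => Real.log (fX2 t / fY2 t)))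
    (hsmooth2 : ContDiff ℝ 1 (fun t => Real.log (fX2 t / fY2 t)))
    (hL2inv : ∀ t, L2inv (Real.log (fX2 t / fY2 t)) = t)
    (hL2invD : ∀ s ∈ D2, HasDerivAt L2inv (L2inv' s) s) :
    ∀ S : Set ℝ, MeasurableSet S →
      (∫ p : ℝ × ℝ in
          {p : ℝ × ℝ | Real.log (fX p.1 / fY p.1) + Real.log (fX2 p.2 / fY2 p.2) ∈ S},
        fX p.1 * fX2 p.2)
      = ∫ t in S,
          conv (D.indicator (fun u => fX (Linv u) * Linv' u))
               (D2.indicator (fun u => fX2 (L2inv u) * L2inv' u)) t := by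
  intro S hS
  exact aux_main hD hrange hmono hsmooth.continuous hLinv hLinvD hD2 hrange2 hmono2
    hsmooth2.continuous hL2inv hL2invD hfXm hfX2m hfXpos hfX2pos hfXi hfX2i S hS
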